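/- For every γ > 0 and nonnegative integer d with d + 1 > γ, the maximum over x ∈ [-γ, γ] of |e^{-x} - Σ_{k=0}^{d} (-x)^k/k!| is at most (eγ/(d+1))^{d+1}. -/

import Mathlib

set_option maxHeartbeats 1000000 in
/-- For `d + 1 > γ > 0`, the degree-`d` Taylor approximation error of `e^{-x}` on
`[-γ, γ]` is at most `(eγ/(d+1))^{d+1}`. -/
theorem taylor_err_le (γ : ℝ) (hγ : 0 < γ) (d : ℕ) (hd : (d : ℝ) + 1 > γ) :
    ∀ x ∈ Set.Icc (-γ) γ,
      |Real.exp (-x) - ∑ k ∈ Finset.range (d + 1), (-x) ^ k / (Nat.factorial k)|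
        ≤ (Real.exp 1 * γ / ((d : ℝ) + 1)) ^ (d + 1) := by
  intro x hx
  set n : ℕ := d + 1 with hn
  have hγn : γ < (n : ℝ) := by push_cast [hn]; linarith [hd]
  have hnpos : (0:ℝ) < n := lt_trans hγ hγn
  have hxγ : |x| ≤ γ := abs_le.mpr ⟨by linarith [hx.1], hx.2⟩
  have hsum : Summable (fun k : ℕ => (-x) ^ k / (Nat.factorial k : ℝ)) :=
    Real.summable_pow_div_factorial (-x)
  have hexp : Real.exp (-x) = ∑' k : ℕ, (-x) ^ k / (Nat.factorial k : ℝ) := by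
    rw [Real.exp_eq_exp_ℝ, NormedSpace.exp_eq_tsum_div]
  have htail : Real.exp (-x) - ∑ k ∈ Finset.range n, (-x) ^ k / (Nat.factorial k : ℝ)
      = ∑' k : ℕ, (-x) ^ (k + n) / (Nat.factorial (k + n) : ℝ) := by
    rw [hexp, ← hsum.sum_add_tsum_nat_add n]; ring
  rw [htail]
  have hsumγ : Summable (fun k : ℕ => γ ^ (k + n) / (Nat.factorial (k + n) : ℝ)) :=
    (summable_nat_add_iff n).mpr (Real.summable_pow_div_factorial γ)
  have hsumN : Summable (fun k : ℕ => ((n:ℝ)) ^ (k + n) / (Nat.factorial (k + n) : ℝ)) :=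
    (summable_nat_add_iff n).mpr (Real.summable_pow_div_factorial (n:ℝ))
  have habs : ∀ k : ℕ, |x| ^ (k + n) / (Nat.factorial (k + n) : ℝ)
      ≤ γ ^ (k + n) / (Nat.factorial (k + n) : ℝ) := by
    intro k
    gcongr
  have h1 : |∑' k : ℕ, (-x) ^ (k + n) / (Nat.factorial (k + n) : ℝ)|
      ≤ ∑' k : ℕ, γ ^ (k + n) / (Nat.factorial (k + n) : ℝ) := by
    have hnorm : |∑' k : ℕ, (-x) ^ (k + n) / (Nat.factorial (k + n) : ℝ)|
        ≤ ∑' k : ℕ, |x| ^ (k + n) / (Nat.factorial (k + n) : ℝ) := by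
      simpa [Real.norm_eq_abs] using
        norm_tsum_le_tsum_norm (f := fun k : ℕ => (-x) ^ (k + n) / (Nat.factorial (k + n) : ℝ))
          (by simpa [Real.norm_eq_abs] using ((summable_nat_add_iff n).mpr (Real.summable_pow_div_factorial |x|)))
    calc |∑' k : ℕ, (-x) ^ (k + n) / (Nat.factorial (k + n) : ℝ)|
        ≤ ∑' k : ℕ, |x| ^ (k + n) / (Nat.factorial (k + n) : ℝ) := hnorm
      _ ≤ _ := Summable.tsum_le_tsum habs
          ((summable_nat_add_iff n).mpr (Real.summable_pow_div_factorial |x|)) hsumγ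
  have h2 : ∀ k : ℕ, γ ^ (k + n) / (Nat.factorial (k + n) : ℝ)
      ≤ (γ / n) ^ n * ((n:ℝ) ^ (k + n) / (Nat.factorial (k + n) : ℝ)) := by
    intro k
    rw [mul_div_assoc']
    have hnum : γ ^ (k + n) ≤ (γ / (n:ℝ)) ^ n * (n:ℝ) ^ (k + n) := by
      have key : (γ / (n:ℝ)) ^ n * (n:ℝ) ^ (k + n) = γ ^ n * (n:ℝ) ^ k := by
        rw [div_pow, pow_add (n:ℝ) k n, mul_comm ((n:ℝ) ^ k), ← mul_assoc,
          div_mul_cancel₀ _ (pow_ne_zero _ hnpos.ne')]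
      rw [key, pow_add]
      have hγk : γ ^ k ≤ (n:ℝ) ^ k := pow_le_pow_left₀ hγ.le hγn.le k
      calc γ ^ k * γ ^ n ≤ (n:ℝ) ^ k * γ ^ n := by gcongr
        _ = γ ^ n * (n:ℝ) ^ k := by ring
    gcongr
  have h3 : ∑' k : ℕ, γ ^ (k + n) / (Nat.factorial (k + n) : ℝ)
      ≤ (γ / n) ^ n * ∑' k : ℕ, ((n:ℝ)) ^ (k + n) / (Nat.factorial (k + n) : ℝ) := by
    rw [← tsum_mul_left]
    exact Summable.tsum_le_tsum h2 hsumγ (hsumN.mul_left _)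
  have h4 : ∑' k : ℕ, ((n:ℝ)) ^ (k + n) / (Nat.factorial (k + n) : ℝ) ≤ Real.exp n := by
    have hfull : Real.exp (n:ℝ) = ∑' k : ℕ, ((n:ℝ)) ^ k / (Nat.factorial k : ℝ) := by
      rw [Real.exp_eq_exp_ℝ, NormedSpace.exp_eq_tsum_div]
    have := (Real.summable_pow_div_factorial (n:ℝ)).sum_add_tsum_nat_add n
    have hhead : 0 ≤ ∑ k ∈ Finset.range n, ((n:ℝ)) ^ k / (Nat.factorial k : ℝ) :=
      Finset.sum_nonneg fun k _ => by positivity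
    rw [hfull]
    linarith [this]
  have hfinal : (γ / n) ^ n * Real.exp n = (Real.exp 1 * γ / n) ^ n := by
    rw [← Real.exp_one_pow, mul_div_assoc, mul_pow]
    ring
  calc |∑' k : ℕ, (-x) ^ (k + n) / (Nat.factorial (k + n) : ℝ)|
      ≤ ∑' k : ℕ, γ ^ (k + n) / (Nat.factorial (k + n) : ℝ) := h1
    _ ≤ (γ / n) ^ n * ∑' k : ℕ, ((n:ℝ)) ^ (k + n) / (Nat.factorial (k + n) : ℝ) := h3
    _ ≤ (γ / n) ^ n * Real.exp n := by gcongr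
    _ = (Real.exp 1 * γ / n) ^ n := hfinal
    _ = (Real.exp 1 * γ / ((d:ℝ) + 1)) ^ (d + 1) := by norm_num [hn]
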